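/- Let T be a completely non-unitary contraction on H and let x ∈ H. Suppose that ⟨x, (Id − λ̄T)⁻¹f⟩ = 0 for all λ with |λ| < 1 and all f ∈ K⋆^⊥, and that ⟨x, (Id − λ̄T*)⁻¹g⟩ = 0 for all λ with |λ| < 1 and all g ∈ K^⊥. Then x = 0. -/

import Mathlib

open scoped InnerProductSpace ComplexConjugate
open ContinuousLinearMap

lemma coeffs_eq_zero (a : ℕ → ℂ) (C : ℝ) (hC : ∀ n, ‖a n‖ ≤ C)
    (h : ∀ z : ℂ, ‖z‖ < 1 → HasSum (fun n => a n * z ^ n) 0) : ∀ n, a n = 0 := by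
  have hp : HasFPowerSeriesOnBall (fun _ : ℂ => (0:ℂ))
      (FormalMultilinearSeries.ofScalars ℂ a) 0 1 := by
    refine ⟨?_, one_pos, ?_⟩
    · apply FormalMultilinearSeries.le_radius_of_bound _ C
      intro n
      rw [FormalMultilinearSeries.ofScalars_norm]
      simpa using hC n
    · intro y hy
      have hy' : ‖y‖ < 1 := by
        have h0 : ‖y‖ₑ < 1 := by simpa using hy
        rwa [← ofReal_norm_eq_enorm, ENNReal.ofReal_lt_one] at h0
      simp only [FormalMultilinearSeries.ofScalars_apply_eq, smul_eq_mul]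
      exact h y hy'
  have hz : FormalMultilinearSeries.ofScalars ℂ a = 0 :=
    HasFPowerSeriesAt.eq_zero (x := 0) hp.hasFPowerSeriesAt
  intro n
  have h3 := congrFun hz n
  rw [show ((0 : FormalMultilinearSeries ℂ ℂ ℂ) n) = 0 from rfl] at h3
  rwa [FormalMultilinearSeries.ofScalars_eq_zero] at h3

lemma inner_resolvent_pow {H : Type*} [NormedAddCommGroup H] [InnerProductSpace ℂ H]
    [CompleteSpace H] (S : H →L[ℂ] H) (hS : ‖S‖ ≤ 1) (f x : H)
    (h : ∀ (lam : ℂ), ‖lam‖ < 1 →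
      ⟪Ring.inverse (1 - (conj lam) • S) f, x⟫_ℂ = 0) :
    ∀ n : ℕ, ⟪x, (S ^ n) f⟫_ℂ = 0 := by
  have hpow : ∀ n, ‖(S ^ n) f‖ ≤ ‖f‖ := by
    intro n
    induction n with
    | zero => simp
    | succ n ih =>
      rw [pow_succ', ContinuousLinearMap.mul_apply]
      calc ‖S ((S ^ n) f)‖ ≤ ‖S‖ * ‖(S ^ n) f‖ := S.le_opNorm _
        _ ≤ 1 * ‖f‖ := mul_le_mul hS ih (norm_nonneg _) zero_le_one
        _ = ‖f‖ := one_mul _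
  apply coeffs_eq_zero _ (‖x‖ * ‖f‖)
  · intro n
    exact le_trans (norm_inner_le_norm _ _)
      (mul_le_mul_of_nonneg_left (hpow n) (norm_nonneg x))
  · intro z hz
    have hu : ‖z • S‖ < 1 := by
      calc ‖z • S‖ = ‖z‖ * ‖S‖ := norm_smul _ _
        _ ≤ ‖z‖ := mul_le_of_le_one_right (norm_nonneg z) hS
        _ < 1 := hz
    have hgeo := hasSum_geom_series_inverse (z • S) hu
    have h1 : HasSum (fun n => ((z • S) ^ n) f) ((Ring.inverse (1 - z • S)) f) :=
      hgeo.mapL (ContinuousLinearMap.apply ℂ H f)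
    have h2 : HasSum (fun n => ⟪x, ((z • S) ^ n) f⟫_ℂ)
        ⟪x, (Ring.inverse (1 - z • S)) f⟫_ℂ := h1.mapL (innerSL ℂ x)
    have hz0 : ⟪x, (Ring.inverse (1 - z • S)) f⟫_ℂ = 0 := by
      have hh := h (conj z) (by simpa using hz)
      rw [Complex.conj_conj] at hh
      rw [← inner_conj_symm, hh, map_zero]
    rw [hz0] at h2
    refine h2.congr_fun fun n => ?_
    rw [smul_pow, ContinuousLinearMap.smul_apply, inner_smul_right, mul_comm]

/-- Let `T` be a completely non-unitary contraction on `H`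
(the only closed `T`-invariant subspace on which `T` restricts to a unitary
is `{0}`), `K = ker(Id − T*T)`, `K⋆ = ker(Id − TT*)`, and `x ∈ H`. If
`⟨x, (Id − λ̄T)⁻¹f⟩ = 0` for all `|λ| < 1` and all `f ∈ K⋆^⊥`, and
`⟨x, (Id − λ̄T*)⁻¹g⟩ = 0` for all `|λ| < 1` and all `g ∈ K^⊥`, then `x = 0`.
(Paper inner products `⟨·,·⟩` are linear in the first variable, i.e.
`⟨u,v⟩ = ⟪v,u⟫_ℂ` in Mathlib's convention; the inverses are `Ring.inverse`.) -/
theorem cnu_vanishing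
    {H : Type*} [NormedAddCommGroup H] [InnerProductSpace ℂ H] [CompleteSpace H]
    (T : H →L[ℂ] H) (hT : ‖T‖ ≤ 1)
    (hcnu : ∀ 𝒦 : Submodule ℂ H, IsClosed (𝒦 : Set H) →
      (∀ v ∈ 𝒦, T v ∈ 𝒦) → (∀ v ∈ 𝒦, ‖T v‖ = ‖v‖) →
      T '' (𝒦 : Set H) = (𝒦 : Set H) → 𝒦 = ⊥)
    (K Ks : Submodule ℂ H)
    (hK : K = LinearMap.ker ((1 - adjoint T ∘L T : H →L[ℂ] H) : H →ₗ[ℂ] H))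
    (hKs : Ks = LinearMap.ker ((1 - T ∘L adjoint T : H →L[ℂ] H) : H →ₗ[ℂ] H))
    (x : H)
    (h1 : ∀ (lam : ℂ), ‖lam‖ < 1 → ∀ f ∈ Ksᗮ,
      ⟪Ring.inverse (1 - (conj lam) • T) f, x⟫_ℂ = 0)
    (h2 : ∀ (lam : ℂ), ‖lam‖ < 1 → ∀ g ∈ Kᗮ,
      ⟪Ring.inverse (1 - (conj lam) • adjoint T) g, x⟫_ℂ = 0) :
    x = 0 := by
  have hA : ‖adjoint T‖ ≤ 1 := by
    rw [show ‖adjoint T‖ = ‖T‖ from LinearIsometryEquiv.norm_map adjoint T]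
    exact hT
  have hKc : IsClosed (K : Set H) := by
    rw [hK]; exact ContinuousLinearMap.isClosed_ker (1 - adjoint T ∘L T)
  have hKsc : IsClosed (Ks : Set H) := by
    rw [hKs]; exact ContinuousLinearMap.isClosed_ker (1 - T ∘L adjoint T)
  haveI : CompleteSpace K := hKc.completeSpace_coe
  haveI : CompleteSpace Ks := hKsc.completeSpace_coe
  have memK : ∀ y : H, y ∈ K ↔ adjoint T (T y) = y := by
    intro y
    rw [hK, LinearMap.mem_ker]
    have hap : (1 - adjoint T ∘L T) y = y - adjoint T (T y) := by
      simp [ContinuousLinearMap.sub_apply]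
    rw [ContinuousLinearMap.coe_coe, hap, sub_eq_zero, eq_comm]
  have memKs : ∀ y : H, y ∈ Ks ↔ T (adjoint T y) = y := by
    intro y
    rw [hKs, LinearMap.mem_ker]
    have hap : (1 - T ∘L adjoint T) y = y - T (adjoint T y) := by
      simp [ContinuousLinearMap.sub_apply]
    rw [ContinuousLinearMap.coe_coe, hap, sub_eq_zero, eq_comm]
  have hadj_pow : ∀ n : ℕ, (adjoint T) ^ n = adjoint (T ^ n) := by
    intro n
    rw [← star_eq_adjoint, ← star_eq_adjoint, star_pow]
  have hx1 : ∀ n : ℕ, ∀ f ∈ Ksᗮ, ⟪x, (T ^ n) f⟫_ℂ = 0 := fun n f hf =>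
    inner_resolvent_pow T hT f x (fun lam hl => h1 lam hl f hf) n
  have hx2 : ∀ n : ℕ, ∀ g ∈ Kᗮ, ⟪x, ((adjoint T) ^ n) g⟫_ℂ = 0 := fun n g hg =>
    inner_resolvent_pow (adjoint T) hA g x (fun lam hl => h2 lam hl g hg) n
  have hxT : ∀ n : ℕ, (T ^ n) x ∈ K := by
    intro n
    rw [← K.orthogonal_orthogonal, Submodule.mem_orthogonal]
    intro g hg
    have h0 : ⟪((adjoint T) ^ n) g, x⟫_ℂ = 0 := by
      rw [← inner_conj_symm, hx2 n g hg, map_zero]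
    rwa [hadj_pow, ContinuousLinearMap.adjoint_inner_left] at h0
  have hxA : ∀ n : ℕ, ((adjoint T) ^ n) x ∈ Ks := by
    intro n
    rw [← Ks.orthogonal_orthogonal, Submodule.mem_orthogonal]
    intro f hf
    have h0 : ⟪(T ^ n) f, x⟫_ℂ = 0 := by
      rw [← inner_conj_symm, hx1 n f hf, map_zero]
    rw [hadj_pow, ContinuousLinearMap.adjoint_inner_right]
    exact h0
  let 𝒦 : Submodule ℂ H :=
    { carrier := {y | (∀ n : ℕ, (T ^ n) y ∈ K) ∧ ∀ n : ℕ, ((adjoint T) ^ n) y ∈ Ks}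
      zero_mem' := ⟨fun n => by simp, fun n => by simp⟩
      add_mem' := fun ha hb => ⟨fun n => by rw [map_add]; exact K.add_mem (ha.1 n) (hb.1 n),
        fun n => by rw [map_add]; exact Ks.add_mem (ha.2 n) (hb.2 n)⟩
      smul_mem' := fun c y hy => ⟨fun n => by rw [map_smul]; exact K.smul_mem c (hy.1 n),
        fun n => by rw [map_smul]; exact Ks.smul_mem c (hy.2 n)⟩ }
  have mem𝒦 : ∀ y : H, y ∈ 𝒦 ↔
      (∀ n : ℕ, (T ^ n) y ∈ K) ∧ ∀ n : ℕ, ((adjoint T) ^ n) y ∈ Ks := fun y => Iff.rfl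
  have hclosed : IsClosed (𝒦 : Set H) := by
    have hset : (𝒦 : Set H)
        = (⋂ n : ℕ, (T ^ n) ⁻¹' K) ∩ ⋂ n : ℕ, ((adjoint T) ^ n) ⁻¹' Ks := by
      ext y
      simp only [Set.mem_inter_iff, Set.mem_iInter, Set.mem_preimage, SetLike.mem_coe, mem𝒦]
    rw [hset]
    exact (isClosed_iInter fun n => hKc.preimage (T ^ n).continuous).inter
      (isClosed_iInter fun n => hKsc.preimage ((adjoint T) ^ n).continuous)
  have hTinv : ∀ y ∈ 𝒦, T y ∈ 𝒦 := by
    intro y hy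
    have e1 : adjoint T (T y) = y := (memK y).mp (by simpa using hy.1 0)
    refine ⟨fun n => ?_, fun n => ?_⟩
    · have hrw : (T ^ n) (T y) = (T ^ (n + 1)) y := by
        rw [pow_succ, ContinuousLinearMap.mul_apply]
      rw [hrw]; exact hy.1 (n + 1)
    · cases n with
      | zero =>
        simp only [pow_zero, ContinuousLinearMap.one_apply]
        rw [memKs, e1]
      | succ m =>
        have hrw : ((adjoint T) ^ (m + 1)) (T y) = ((adjoint T) ^ m) y := by
          rw [pow_succ, ContinuousLinearMap.mul_apply, e1]
        rw [hrw]; exact hy.2 m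
  have hAinv : ∀ y ∈ 𝒦, adjoint T y ∈ 𝒦 := by
    intro y hy
    have e2 : T (adjoint T y) = y := (memKs y).mp (by simpa using hy.2 0)
    refine ⟨fun n => ?_, fun n => ?_⟩
    · cases n with
      | zero =>
        simp only [pow_zero, ContinuousLinearMap.one_apply]
        rw [memK, e2]
      | succ m =>
        have hrw : (T ^ (m + 1)) (adjoint T y) = (T ^ m) y := by
          rw [pow_succ, ContinuousLinearMap.mul_apply, e2]
        rw [hrw]; exact hy.1 m
    · have hrw : ((adjoint T) ^ n) (adjoint T y) = ((adjoint T) ^ (n + 1)) y := by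
        rw [pow_succ, ContinuousLinearMap.mul_apply]
      rw [hrw]; exact hy.2 (n + 1)
  have hnorm : ∀ y ∈ 𝒦, ‖T y‖ = ‖y‖ := by
    intro y hy
    have e1 : adjoint T (T y) = y := (memK y).mp (by simpa using hy.1 0)
    have hin : ⟪T y, T y⟫_ℂ = ⟪y, y⟫_ℂ := by
      calc ⟪T y, T y⟫_ℂ = ⟪adjoint T (T y), y⟫_ℂ :=
            (ContinuousLinearMap.adjoint_inner_left T y (T y)).symm
        _ = ⟪y, y⟫_ℂ := by rw [e1]
    have h5 : ‖T y‖ ^ 2 = ‖y‖ ^ 2 := by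
      rw [inner_self_eq_norm_sq_to_K, inner_self_eq_norm_sq_to_K] at hin
      exact_mod_cast hin
    nlinarith [norm_nonneg (T y), norm_nonneg y]
  have himg : T '' (𝒦 : Set H) = (𝒦 : Set H) := by
    apply Set.Subset.antisymm
    · rintro _ ⟨y, hy, rfl⟩
      exact hTinv y hy
    · intro y hy
      have e2 : T (adjoint T y) = y := (memKs y).mp (by simpa using hy.2 0)
      exact ⟨adjoint T y, hAinv y hy, e2⟩
  have hbot := hcnu 𝒦 hclosed hTinv hnorm himg
  have hx𝒦 : x ∈ 𝒦 := ⟨hxT, hxA⟩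
  rw [hbot] at hx𝒦
  simpa using hx𝒦
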